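/- Let e be a positive integer and let (x, y, z, w) be a solution in positive integers of (4^e−1)^x + 4^{e·y} + (4^e+1)^z = (4^e+2)^w such that (e, x, y, z, w) ≠ (1, 3, 1, 1, 2) and (e, x, y, z, w) ≠ (1, 3, 3, 3, 3). Then w > 4^e / (μ_x + μ_z), where μ_x = log(4^e+2)/log(4^e−1) and μ_z = log(4^e+2)/log(4^e+1). -/

import Mathlib

private lemma expand_aux (t : ℤ) (k : ℕ) :
    ∃ A : ℤ, (1 + t) ^ k = 1 + k * t + (k.choose 2 : ℤ) * t ^ 2 + t ^ 3 * A := by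
  induction k with
  | zero => exact ⟨0, by norm_num⟩
  | succ k ih =>
    obtain ⟨A, hA⟩ := ih
    have hc : ((k + 1).choose 2 : ℤ) = (k.choose 2 : ℤ) + (k : ℤ) := by
      have h : (k + 1).choose 2 = k.choose 1 + k.choose 2 := Nat.choose_succ_succ k 1
      rw [h, Nat.choose_one_right]; push_cast; ring
    refine ⟨(k.choose 2 : ℤ) + A + t * A, ?_⟩
    have h1 : (1 + t) ^ (k + 1) = (1 + t) ^ k * (1 + t) := by ring
    rw [h1, hA, hc]; push_cast; ring

private lemma choose_odd_val (i : ℕ) : (2 * i + 1).choose 2 = i * (2 * i + 1) := by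
  rw [Nat.choose_two_right]
  have h1 : 2 * i + 1 - 1 = 2 * i := by omega
  rw [h1]
  have h2 : (2 * i + 1) * (2 * i) = (i * (2 * i + 1)) * 2 := by ring
  rw [h2, Nat.mul_div_cancel _ (by norm_num)]

private lemma L1 {n : ℕ} (h : 16 ≤ n) : (n + 2) ^ 14 < (n - 1) ^ 15 := by
  have h5 : 5 * (n + 2) ≤ 6 * (n - 1) := by omega
  have k2 : (5 * (n + 2)) ^ 14 ≤ (6 * (n - 1)) ^ 14 := Nat.pow_le_pow_left h5 14
  rw [mul_pow, mul_pow] at k2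
  have hpos : (0 : ℕ) < (n - 1) ^ 14 := Nat.pow_pos (by omega)
  have k4 : 6 ^ 14 * (n - 1) ^ 14 < (15 * 5 ^ 14) * (n - 1) ^ 14 :=
    (Nat.mul_lt_mul_right hpos).mpr (by norm_num)
  have k5 : (15 * 5 ^ 14) * (n - 1) ^ 14 ≤ 5 ^ 14 * (n - 1) ^ 15 := by
    have h15 : (n - 1) ^ 15 = (n - 1) * (n - 1) ^ 14 := by ring
    rw [h15]
    calc (15 * 5 ^ 14) * (n - 1) ^ 14 = 5 ^ 14 * (15 * (n - 1) ^ 14) := by ring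
      _ ≤ 5 ^ 14 * ((n - 1) * (n - 1) ^ 14) := by
          exact Nat.mul_le_mul_left _ (Nat.mul_le_mul_right _ (by omega))
  have : 5 ^ 14 * (n + 2) ^ 14 < 5 ^ 14 * (n - 1) ^ 15 := by omega
  exact lt_of_mul_lt_mul_left this (Nat.zero_le _)

private lemma L2 {n : ℕ} (h : 16 ≤ n) : (n + 2) ^ 17 < (n + 1) ^ 18 := by
  have h5 : 17 * (n + 2) ≤ 18 * (n + 1) := by omega
  have k2 : (17 * (n + 2)) ^ 17 ≤ (18 * (n + 1)) ^ 17 := Nat.pow_le_pow_left h5 17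
  rw [mul_pow, mul_pow] at k2
  have hpos : (0 : ℕ) < (n + 1) ^ 17 := Nat.pow_pos (by omega)
  have k4 : 18 ^ 17 * (n + 1) ^ 17 < (17 * 17 ^ 17) * (n + 1) ^ 17 :=
    (Nat.mul_lt_mul_right hpos).mpr (by norm_num)
  have k5 : (17 * 17 ^ 17) * (n + 1) ^ 17 ≤ 17 ^ 17 * (n + 1) ^ 18 := by
    have h18 : (n + 1) ^ 18 = (n + 1) * (n + 1) ^ 17 := by ring
    rw [h18]
    calc (17 * 17 ^ 17) * (n + 1) ^ 17 = 17 ^ 17 * (17 * (n + 1) ^ 17) := by ring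
      _ ≤ 17 ^ 17 * ((n + 1) * (n + 1) ^ 17) := by
          exact Nat.mul_le_mul_left _ (Nat.mul_le_mul_right _ (by omega))
  have : 17 ^ 17 * (n + 2) ^ 17 < 17 ^ 17 * (n + 1) ^ 18 := by omega
  exact lt_of_mul_lt_mul_left this (Nat.zero_le _)

private lemma growth {e : ℕ} (h : 3 ≤ e) : 507 * (4 * e - 1) + 445 ≤ 238 * 4 ^ e := by
  induction e, h using Nat.le_induction with
  | base => norm_num
  | succ n hn ih =>
    have h4 : 4 ^ (n + 1) = 4 * 4 ^ n := by ring
    omega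

private lemma size_bound {e x z w : ℕ} (he : 2 ≤ e) (hw : w ≤ 4 * e - 1)
    (h14 : 14 * x < 15 * w) (h17 : 17 * z < 18 * w) : x + z + 1 ≤ 4 ^ e - 1 := by
  rcases eq_or_lt_of_le he with he2 | he3
  · subst he2
    norm_num at hw ⊢
    omega
  · have hg : 507 * (4 * e - 1) + 445 ≤ 238 * 4 ^ e := growth (by omega)
    omega

private lemma parities {e x y z w : ℕ} (he : 0 < e) (hx : 0 < x) (hy : 0 < y)
    (hz : 0 < z) (hw2 : 2 ≤ w)
    (hZ : ((4:ℤ)^e - 1)^x + (4:ℤ)^(e*y) + ((4:ℤ)^e + 1)^z = ((4:ℤ)^e + 2)^w)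
    (h4ge : (4:ℤ) ≤ (4:ℤ)^e) :
    Odd x ∧ Odd z ∧ Odd y := by
  have hN0 : (4:ℤ)^e ≡ 0 [ZMOD 4] := (Int.modEq_zero_iff_dvd).mpr (dvd_pow_self 4 he.ne')
  -- x odd
  have hxodd : Odd x := by
    have hA : ((4:ℤ)^e - 1)^x ≡ (-1)^x [ZMOD 4] := by
      have := hN0.sub_right 1; exact Int.ModEq.pow x (by simpa using this)
    have hB : (4:ℤ)^(e*y) ≡ 0 [ZMOD 4] :=
      (Int.modEq_zero_iff_dvd).mpr (dvd_pow_self 4 (by positivity))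
    have hC : ((4:ℤ)^e + 1)^z ≡ 1 [ZMOD 4] := by
      have := (hN0.add_right 1).pow z; simpa using this
    have hR : ((4:ℤ)^e + 2)^w ≡ 0 [ZMOD 4] := by
      have h2 : ((4:ℤ)^e + 2) ≡ 2 [ZMOD 4] := by simpa using hN0.add_right 2
      refine (h2.pow w).trans ((Int.modEq_zero_iff_dvd).mpr ?_)
      calc (4:ℤ) = 2^2 := by norm_num
        _ ∣ 2^w := pow_dvd_pow 2 hw2
    have hL0 : ((4:ℤ)^e - 1)^x + (4:ℤ)^(e*y) + ((4:ℤ)^e + 1)^z ≡ 0 [ZMOD 4] := by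
      rw [hZ]; exact hR
    have hsum : (-1:ℤ)^x + 0 + 1 ≡ 0 [ZMOD 4] := ((hA.add hB).add hC).symm.trans hL0
    rcases Nat.even_or_odd x with hev | hod
    · rw [hev.neg_one_pow] at hsum
      have := Int.ModEq.dvd hsum
      omega
    · exact hod
  -- z odd
  have hzodd : Odd z := by
    have h41 : (4:ℤ)^e ≡ 1 [ZMOD 3] := by
      have : (4:ℤ) ≡ 1 [ZMOD 3] := by decide
      simpa using this.pow e
    have hA : ((4:ℤ)^e - 1)^x ≡ 0 [ZMOD 3] := by
      have h := (h41.sub_right 1).pow x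
      simpa [zero_pow hx.ne'] using h
    have hB : (4:ℤ)^(e*y) ≡ 1 [ZMOD 3] := by
      have : (4:ℤ) ≡ 1 [ZMOD 3] := by decide
      simpa using this.pow (e*y)
    have hC : ((4:ℤ)^e + 1)^z ≡ (-1)^z [ZMOD 3] := by
      refine Int.ModEq.pow z ?_
      have := h41.add_right 1
      exact this.trans (by decide)
    have hR : ((4:ℤ)^e + 2)^w ≡ 0 [ZMOD 3] := by
      have h2 : ((4:ℤ)^e + 2) ≡ 0 [ZMOD 3] := by
        have := h41.add_right 2
        exact this.trans (by decide)
      have h := h2.pow w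
      simpa [zero_pow (by omega : w ≠ 0)] using h
    have hL0 : ((4:ℤ)^e - 1)^x + (4:ℤ)^(e*y) + ((4:ℤ)^e + 1)^z ≡ 0 [ZMOD 3] := by
      rw [hZ]; exact hR
    have hsum : (0:ℤ) + 1 + (-1)^z ≡ 0 [ZMOD 3] := ((hA.add hB).add hC).symm.trans hL0
    rcases Nat.even_or_odd z with hev | hod
    · rw [hev.neg_one_pow] at hsum
      have := Int.ModEq.dvd hsum
      omega
    · exact hod
  -- y odd
  have hyodd : Odd y := by
    rcases Nat.even_or_odd y with hev | hod
    · exfalso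
      set q : ℤ := (4:ℤ)^e + 1 with hq
      have hq0 : (4:ℤ)^e ≡ -1 [ZMOD q] := by
        rw [Int.modEq_iff_dvd, show (-1:ℤ) - 4^e = -q by rw [hq]; ring]
        exact dvd_neg.mpr dvd_rfl
      have hA : ((4:ℤ)^e - 1)^x ≡ -(2^x) [ZMOD q] := by
        have h := (hq0.sub_right 1).pow x
        have h2 : ((-1:ℤ) - 1)^x = -(2^x) := by
          rw [show ((-1:ℤ) - 1) = -2 by norm_num, hxodd.neg_pow]
        rwa [h2] at h
      have hB : (4:ℤ)^(e*y) ≡ 1 [ZMOD q] := by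
        rw [pow_mul]
        have h := hq0.pow y
        rwa [hev.neg_one_pow] at h
      have hC : ((4:ℤ)^e + 1)^z ≡ 0 [ZMOD q] :=
        (Int.modEq_zero_iff_dvd).mpr (by rw [hq]; exact dvd_pow_self _ hz.ne')
      have hR : ((4:ℤ)^e + 2)^w ≡ 1 [ZMOD q] := by
        have h := (hq0.add_right 2).pow w
        simpa using h
      have hL1 : ((4:ℤ)^e - 1)^x + (4:ℤ)^(e*y) + ((4:ℤ)^e + 1)^z ≡ 1 [ZMOD q] := by
        rw [hZ]; exact hR
      have hsum : -(2:ℤ)^x + 1 + 0 ≡ 1 [ZMOD q] := ((hA.add hB).add hC).symm.trans hL1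
      have hdvdZ : q ∣ (2:ℤ)^x := by
        have := Int.ModEq.dvd hsum
        simpa using this
      have hdvdN : (4^e + 1 : ℕ) ∣ 2^x := by
        have hcast : ((4^e + 1 : ℕ) : ℤ) = q := by rw [hq]; push_cast; ring
        have : ((4^e + 1 : ℕ) : ℤ) ∣ ((2^x : ℕ) : ℤ) := by
          rw [hcast]; exact_mod_cast hdvdZ
        exact_mod_cast this
      have h2d : 2 ∣ (4:ℕ)^e := dvd_pow (by norm_num) he.ne'
      have hoddq : Odd (4^e + 1 : ℕ) := Even.add_one (even_iff_two_dvd.mpr h2d)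
      have hco : Nat.Coprime (4^e + 1) (2^x) := by
        refine Nat.Coprime.pow_right x (Nat.Coprime.symm ?_)
        refine (Nat.prime_two.coprime_iff_not_dvd).mpr ?_
        rcases hoddq with ⟨r, hr⟩
        omega
      have := Nat.Coprime.eq_one_of_dvd hco hdvdN
      have h4N : (4:ℕ) ≤ 4^e := by
        calc (4:ℕ) = 4^1 := (pow_one 4).symm
          _ ≤ 4^e := Nat.pow_le_pow_right (by norm_num) he
      omega
    · exact hod
  exact ⟨hxodd, hzodd, hyodd⟩

private lemma xz_large {e₀ x y z w : ℕ} (hx : 0 < x) (hz : 0 < z)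
    (hxodd : Odd x) (hzodd : Odd z) (hyodd : Odd y)
    (hZ2 : (((2:ℤ)^(2*e₀+2)) - 1)^x + ((2:ℤ)^(2*e₀+2))^y + (((2:ℤ)^(2*e₀+2)) + 1)^z
           = (((2:ℤ)^(2*e₀+2)) + 2)^w)
    (hw4 : 4*e₀ + 4 ≤ w) :
    2^(2*e₀+2) ≤ x + z := by
  set N : ℤ := (2:ℤ)^(2*e₀+2) with hN
  obtain ⟨A, hA⟩ := expand_aux (-N) x
  obtain ⟨B, hB⟩ := expand_aux N z
  have haX : (N - 1)^x = -1 + x*N - (x.choose 2 : ℤ)*N^2 + N^3*A := by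
    have h1 : (N - 1 : ℤ) = -(1 + -N) := by ring
    rw [h1, hxodd.neg_pow, hA]; ring
  have hbX : (N + 1)^z = 1 + z*N + (z.choose 2 : ℤ)*N^2 + N^3*B := by
    rw [add_comm N 1, hB]
  -- divisibility of RHS by N^2
  have hdvdR : N * N ∣ (N + 2)^w := by
    have hm : N + 2 = 2 * ((2:ℤ)^(2*e₀+1) + 1) := by rw [hN]; ring
    have h1 : (N:ℤ) * N = 2^(4*e₀+4) := by rw [hN]; ring
    rw [h1, hm, mul_pow]
    exact Dvd.dvd.mul_right (pow_dvd_pow 2 (by omega)) _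
  obtain ⟨ky, hky⟩ := hyodd
  set D : ℤ := (z.choose 2 : ℤ) - (x.choose 2 : ℤ) with hD
  rcases Nat.eq_zero_or_pos ky with hky0 | hkypos
  · -- y = 1 : contradiction
    exfalso
    have hy1 : y = 1 := by omega
    have hKey : N * (((x:ℤ) + z + 1) + N*D + N*N*(A+B)) = (N + 2)^w := by
      rw [← hZ2, haX, hbX, hy1, hD]; ring
    obtain ⟨k, hk⟩ := hdvdR
    rw [hk] at hKey
    have hNne : N ≠ 0 := by rw [hN]; positivity
    have hQ : ((x:ℤ) + z + 1) + N*D + N*N*(A+B) = N * k :=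
      mul_left_cancel₀ hNne (by rw [hKey]; ring)
    have hdvd : (2:ℤ) ∣ ((x:ℤ) + z + 1) := by
      have hNdvd : N ∣ ((x:ℤ) + z + 1) := ⟨k - D - N*(A+B), by linear_combination hQ⟩
      have h2N : (2:ℤ) ∣ N := ⟨2^(2*e₀+1), by rw [hN]; ring⟩
      exact h2N.trans hNdvd
    obtain ⟨i, hi⟩ := hxodd
    obtain ⟨j, hj⟩ := hzodd
    omega
  · -- y ≥ 3
    obtain ⟨k₁, hk₁⟩ : ∃ k₁, ky = k₁ + 1 := ⟨ky - 1, by omega⟩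
    have hy3 : y = 2*k₁ + 3 := by omega
    have hKey : N * (((x:ℤ) + z) + N*D + N*N*(A+B+N^(2*k₁))) = (N + 2)^w := by
      rw [← hZ2, haX, hbX, hy3, hD]; ring
    obtain ⟨k, hk⟩ := hdvdR
    rw [hk] at hKey
    have hNne : N ≠ 0 := by rw [hN]; positivity
    have hQ : ((x:ℤ) + z) + N*D + N*N*(A+B+N^(2*k₁)) = N * k :=
      mul_left_cancel₀ hNne (by rw [hKey]; ring)
    have hNdvd : N ∣ ((x:ℤ) + z) := ⟨k - D - N*(A+B+N^(2*k₁)), by linear_combination hQ⟩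
    have hle : N ≤ (x:ℤ) + z := Int.le_of_dvd (by positivity) hNdvd
    rw [hN] at hle
    have h2 : ((2^(2*e₀+2) : ℕ) : ℤ) ≤ ((x + z : ℕ) : ℤ) := by push_cast; exact_mod_cast hle
    exact_mod_cast h2

private lemma no_small_core {e₁ x z w : ℕ} (eps D G : ℤ) (hx : 0 < x) (hz : 0 < z)
    (hxodd : Odd x) (hzodd : Odd z)
    (heps : eps = 0 ∨ eps = 1)
    (hD : D = (z.choose 2 : ℤ) - (x.choose 2 : ℤ))
    (hKey : (2:ℤ)^(2*e₁+4) * (((x:ℤ) + z + eps) + 2^(2*e₁+4)*D + 2^(2*e₁+4)*(2^(2*e₁+4)*G))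
            = ((2:ℤ)^(2*e₁+4) + 2)^w)
    (hszZ : (x:ℤ) + z + 1 ≤ 2^(2*e₁+4) - 1)
    (hwle : w ≤ 4*e₁ + 7)
    (hspecial : x = 1 → z = 1 → w = 2*e₁+5 → eps = 0 → False) : False := by
  set M : ℤ := (2:ℤ)^(2*e₁+3) + 1 with hM
  have hModd : Odd M := ⟨2^(2*e₁+2), by rw [hM]; ring⟩
  have hNM : (2:ℤ)^(2*e₁+4) + 2 = 2 * M := by rw [hM]; ring
  obtain ⟨H0, hH0⟩ := expand_aux ((2:ℤ)^(2*e₁+3)) w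
  set H : ℤ := (w.choose 2 : ℤ) + 2^(2*e₁+3)*H0 with hH
  have hmX : M^w = 1 + w*2^(2*e₁+3) + 2^(4*e₁+6)*H := by
    rw [hM, add_comm ((2:ℤ)^(2*e₁+3)) 1, hH0, hH]; ring
  set Q : ℤ := ((x:ℤ) + z + eps) + 2^(2*e₁+4)*D + 2^(2*e₁+4)*(2^(2*e₁+4)*G) with hQdef
  have hx1 : (1:ℤ) ≤ (x:ℤ) := by exact_mod_cast hx
  have hz1 : (1:ℤ) ≤ (z:ℤ) := by exact_mod_cast hz
  have heps01 : 0 ≤ eps ∧ eps ≤ 1 := by rcases heps with h | h <;> simp [h]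
  -- w ≥ 2e₁+4
  have hwE : 2*e₁+4 ≤ w := by
    by_contra hcon
    push_neg at hcon
    have h1 : (2:ℤ)^w * (2^(2*e₁+4-w) * Q) = 2^w * M^w := by
      calc (2:ℤ)^w * (2^(2*e₁+4-w) * Q) = 2^(w + (2*e₁+4-w)) * Q := by rw [pow_add]; ring
        _ = 2^(2*e₁+4) * Q := by rw [show w + (2*e₁+4-w) = 2*e₁+4 by omega]
        _ = ((2:ℤ)^(2*e₁+4) + 2)^w := hKey
        _ = 2^w * M^w := by rw [hNM, mul_pow]
    have h2 : 2^(2*e₁+4-w) * Q = M^w := mul_left_cancel₀ (pow_ne_zero w two_ne_zero) h1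
    have hModdw : Odd (M^w) := hModd.pow
    have hEv : Even ((2:ℤ)^(2*e₁+4-w) * Q) := by
      obtain ⟨u, hu⟩ : ∃ u, 2*e₁+4-w = u + 1 := ⟨2*e₁+3-w, by omega⟩
      exact ⟨2^u * Q, by rw [hu]; ring⟩
    rw [h2] at hEv
    exact (Int.not_odd_iff_even.mpr hEv) hModdw
  obtain ⟨v, hv⟩ : ∃ v, w = 2*e₁+4+v := ⟨w - (2*e₁+4), by omega⟩
  have hvle : v ≤ 2*e₁+3 := by omega
  have hQ2 : Q = 2^v * M^w := by
    refine mul_left_cancel₀ (pow_ne_zero (2*e₁+4) (two_ne_zero (α := ℤ))) ?_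
    rw [hKey]
    calc ((2:ℤ)^(2*e₁+4) + 2)^w = 2^w * M^w := by rw [hNM, mul_pow]
      _ = 2^(2*e₁+4) * (2^v * M^w) := by rw [hv, pow_add]; ring
  have hMain : ((x:ℤ) + z + eps) + 2^(2*e₁+4)*D + 2^(2*e₁+4)*(2^(2*e₁+4)*G)
      = 2^v + w*2^(v+2*e₁+3) + 2^(v+4*e₁+6)*H := by
    have h := hQ2
    rw [hmX, hQdef] at h
    calc ((x:ℤ) + z + eps) + 2^(2*e₁+4)*D + 2^(2*e₁+4)*(2^(2*e₁+4)*G)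
        = 2^v * (1 + w*2^(2*e₁+3) + 2^(4*e₁+6)*H) := h
      _ = 2^v + w*2^(v+2*e₁+3) + 2^(v+4*e₁+6)*H := by rw [pow_add, pow_add]; ring
  rcases v with _ | v₁
  · -- v = 0
    have hw0 : w = 2*e₁+4 := by omega
    rw [hw0] at hMain
    have hdvd : (2:ℤ)^(2*e₁+4) ∣ ((x:ℤ) + z + eps - 1) :=
      ⟨(e₁+2) + 2^(2*e₁+2)*H - D - 2^(2*e₁+4)*G, by push_cast [hw0] at hMain ⊢; linear_combination hMain⟩
    have hpos : 0 < (x:ℤ) + z + eps - 1 := by linarith [heps01.1]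
    have hle := Int.le_of_dvd hpos hdvd
    linarith [heps01.2]
  · -- v ≥ 1
    have hb1 : (2:ℤ)^(v₁+1) ≤ 2^(2*e₁+3) := pow_le_pow_right₀ (by norm_num) (by omega)
    have hb2 : (2:ℤ)^(2*e₁+4) = 2*2^(2*e₁+3) := by ring
    have hb3 : (0:ℤ) < 2^(2*e₁+3) := by positivity
    have hb4 : (2:ℤ) ≤ 2^(v₁+1) := by
      calc (2:ℤ) = 2^1 := (pow_one 2).symm
        _ ≤ 2^(v₁+1) := pow_le_pow_right₀ (by norm_num) (by omega)
    have hdvd : (2:ℤ)^(2*e₁+4) ∣ ((x:ℤ) + z + eps - 2^(v₁+1)) :=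
      ⟨w*2^v₁ + 2^(v₁+2*e₁+3)*H - D - 2^(2*e₁+4)*G, by linear_combination hMain⟩
    have habs : |(x:ℤ) + z + eps - 2^(v₁+1)| < 2^(2*e₁+4) := by
      rw [abs_lt]
      constructor
      · linarith [heps01.1]
      · linarith [heps01.2]
    have hzero : (x:ℤ) + z + eps - 2^(v₁+1) = 0 := by
      by_contra hne
      have h1 : (2:ℤ)^(2*e₁+4) ∣ |(x:ℤ) + z + eps - 2^(v₁+1)| := (dvd_abs _ _).mpr hdvd
      have h2 := Int.le_of_dvd (abs_pos.mpr hne) h1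
      linarith
    rcases heps with heps0 | heps1
    · -- eps = 0
      subst heps0
      rcases v₁ with _ | v₂
      · -- v = 1 : x = z = 1, special case
        have hxz2 : x + z = 2 := by
          have : ((x:ℤ) + z) = 2 := by norm_num at hzero; linarith
          exact_mod_cast this
        exact hspecial (by omega) (by omega) (by omega) rfl
      · -- v ≥ 2 : parity of D
        have hxz4 : ((x:ℤ) + z) = 2^(v₂+2) := by linarith
        have hcan : (2:ℤ)^(2*e₁+4) * (D + 2^(2*e₁+4)*G)
            = 2^(2*e₁+4) * ((w:ℤ)*2^(v₂+1) + 2^(v₂+2*e₁+4)*H) := by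
          linear_combination hMain - hxz4
        have hc2 := mul_left_cancel₀ (pow_ne_zero (2*e₁+4) (two_ne_zero (α := ℤ))) hcan
        have hDeven : (2:ℤ) ∣ D :=
          ⟨(w:ℤ)*2^v₂ + 2^(v₂+2*e₁+3)*H - 2^(2*e₁+3)*G, by linear_combination hc2⟩
        obtain ⟨i, hi⟩ := hxodd
        obtain ⟨j, hj⟩ := hzodd
        have hcx : x.choose 2 = i*(2*i+1) := by rw [hi, choose_odd_val]
        have hcz : z.choose 2 = j*(2*j+1) := by rw [hj, choose_odd_val]
        rw [hD, hcx, hcz] at hDeven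
        have pi2 : i*(2*i+1) % 2 = i % 2 := by
          rw [Nat.mul_mod, show (2*i+1) % 2 = 1 from by omega]
          omega
        have pj2 : j*(2*j+1) % 2 = j % 2 := by
          rw [Nat.mul_mod, show (2*j+1) % 2 = 1 from by omega]
          omega
        have hij : (i + j) % 2 = 1 := by
          have h4 : x + z = 2^(v₂+2) := by exact_mod_cast hxz4
          have h4' : 2^(v₂+2) = 4*2^v₂ := by ring
          omega
        omega
    · -- eps = 1 : parity contradiction
      subst heps1
      have hs : x + z + 1 = 2^(v₁+1) := by
        have : ((x:ℤ) + z + 1) = 2^(v₁+1) := by linarith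
        exact_mod_cast this
      obtain ⟨i, hi⟩ := hxodd
      obtain ⟨j, hj⟩ := hzodd
      have h2 : 2^(v₁+1) = 2*2^v₁ := by ring
      omega

private lemma no_small {e₁ x y z w : ℕ} (hx : 0 < x) (hz : 0 < z) (hw : 0 < w)
    (hxodd : Odd x) (hzodd : Odd z) (hyodd : Odd y)
    (heq : (4^(e₁+2) - 1)^x + 4^((e₁+2)*y) + (4^(e₁+2) + 1)^z = (4^(e₁+2) + 2)^w)
    (hZ2 : ((2:ℤ)^(2*e₁+4) - 1)^x + ((2:ℤ)^(2*e₁+4))^y + ((2:ℤ)^(2*e₁+4) + 1)^z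
           = ((2:ℤ)^(2*e₁+4) + 2)^w)
    (hwle : w ≤ 4*e₁ + 7) : False := by
  -- size bounds
  have h16 : 16 ≤ 4^(e₁+2) := by
    calc (16:ℕ) = 4^2 := by norm_num
      _ ≤ 4^(e₁+2) := Nat.pow_le_pow_right (by norm_num) (by omega)
  have hp1 : 0 < 4^((e₁+2)*y) := Nat.pow_pos (by norm_num)
  have hp2 : 0 < (4^(e₁+2)+1)^z := Nat.pow_pos (by omega)
  have hax : (4^(e₁+2)-1)^x < (4^(e₁+2)+2)^w := by omega
  have hbz : (4^(e₁+2)+1)^z < (4^(e₁+2)+2)^w := by omega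
  have h14 : 14*x < 15*w := by
    have t3 : (4^(e₁+2)-1)^(14*x) < (4^(e₁+2)-1)^(15*w) := by
      calc (4^(e₁+2)-1)^(14*x) = ((4^(e₁+2)-1)^x)^14 := by rw [← pow_mul, mul_comm]
        _ < ((4^(e₁+2)+2)^w)^14 := Nat.pow_lt_pow_left hax (by norm_num)
        _ = ((4^(e₁+2)+2)^14)^w := by rw [← pow_mul, ← pow_mul, mul_comm]
        _ ≤ ((4^(e₁+2)-1)^15)^w := Nat.pow_le_pow_left (le_of_lt (L1 h16)) w
        _ = (4^(e₁+2)-1)^(15*w) := by rw [← pow_mul, mul_comm]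
    exact (Nat.pow_lt_pow_iff_right (by omega : 1 < 4^(e₁+2) - 1)).mp t3
  have h17 : 17*z < 18*w := by
    have t3 : (4^(e₁+2)+1)^(17*z) < (4^(e₁+2)+1)^(18*w) := by
      calc (4^(e₁+2)+1)^(17*z) = ((4^(e₁+2)+1)^z)^17 := by rw [← pow_mul, mul_comm]
        _ < ((4^(e₁+2)+2)^w)^17 := Nat.pow_lt_pow_left hbz (by norm_num)
        _ = ((4^(e₁+2)+2)^17)^w := by rw [← pow_mul, ← pow_mul, mul_comm]
        _ ≤ ((4^(e₁+2)+1)^18)^w := Nat.pow_le_pow_left (le_of_lt (L2 h16)) w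
        _ = (4^(e₁+2)+1)^(18*w) := by rw [← pow_mul, mul_comm]
    exact (Nat.pow_lt_pow_iff_right (by omega : 1 < 4^(e₁+2) + 1)).mp t3
  have hsz : x + z + 1 ≤ 4^(e₁+2) - 1 :=
    size_bound (by omega) (by omega : w ≤ 4*(e₁+2) - 1) h14 h17
  have h4Z : ((4:ℤ))^(e₁+2) = 2^(2*e₁+4) := by
    rw [show (4:ℤ) = 2^2 by norm_num, ← pow_mul, show 2*(e₁+2) = 2*e₁+4 from by ring]
  have hszZ : (x:ℤ) + z + 1 ≤ 2^(2*e₁+4) - 1 := by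
    have h1 : ((x + z + 1 : ℕ) : ℤ) ≤ ((4^(e₁+2) - 1 : ℕ) : ℤ) := Int.ofNat_le.mpr hsz
    rw [Nat.cast_sub (by omega : 1 ≤ 4^(e₁+2))] at h1
    push_cast at h1
    rw [h4Z] at h1
    exact_mod_cast h1
  -- expansions
  obtain ⟨A, hA⟩ := expand_aux (-((2:ℤ)^(2*e₁+4))) x
  obtain ⟨B, hB⟩ := expand_aux ((2:ℤ)^(2*e₁+4)) z
  have haX : ((2:ℤ)^(2*e₁+4) - 1)^x
      = -1 + x*2^(2*e₁+4) - (x.choose 2 : ℤ)*(2^(2*e₁+4))^2 + (2^(2*e₁+4))^3*A := by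
    have h1 : ((2:ℤ)^(2*e₁+4) - 1 : ℤ) = -(1 + -((2:ℤ)^(2*e₁+4))) := by ring
    rw [h1, hxodd.neg_pow, hA]; ring
  have hbX : ((2:ℤ)^(2*e₁+4) + 1)^z
      = 1 + z*2^(2*e₁+4) + (z.choose 2 : ℤ)*(2^(2*e₁+4))^2 + (2^(2*e₁+4))^3*B := by
    rw [add_comm ((2:ℤ)^(2*e₁+4)) 1, hB]
  obtain ⟨ky, hky⟩ := hyodd
  by_cases hky0 : ky = 0
  · -- y = 1
    have hy1 : y = 1 := by omega
    have hKey : (2:ℤ)^(2*e₁+4) * (((x:ℤ) + z + 1)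
        + 2^(2*e₁+4)*((z.choose 2 : ℤ) - (x.choose 2 : ℤ))
        + 2^(2*e₁+4)*(2^(2*e₁+4)*(A+B))) = ((2:ℤ)^(2*e₁+4) + 2)^w := by
      rw [← hZ2, haX, hbX, hy1]; ring
    exact no_small_core 1 _ _ hx hz hxodd hzodd (Or.inr rfl) rfl hKey hszZ
      (by omega) (fun _ _ _ h => by norm_num at h)
  · -- y = 2k₁+3
    obtain ⟨k₁, hk₁⟩ : ∃ k₁, ky = k₁ + 1 := ⟨ky - 1, by omega⟩
    have hy3 : y = 2*k₁ + 3 := by omega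
    have hKey : (2:ℤ)^(2*e₁+4) * (((x:ℤ) + z + 0)
        + 2^(2*e₁+4)*((z.choose 2 : ℤ) - (x.choose 2 : ℤ))
        + 2^(2*e₁+4)*(2^(2*e₁+4)*(A+B+((2:ℤ)^(2*e₁+4))^(2*k₁)))) = ((2:ℤ)^(2*e₁+4) + 2)^w := by
      rw [← hZ2, haX, hbX, hy3]; ring
    refine no_small_core 0 _ _ hx hz hxodd hzodd (Or.inl rfl) rfl hKey hszZ (by omega) ?_
    -- special case x = z = 1, w = 2e₁+5
    intro hx1 hz1 hw' _
    subst hx1; subst hz1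
    rw [hy3] at hZ2
    rw [pow_one, pow_one] at hZ2
    set M : ℤ := (2:ℤ)^(2*e₁+3) + 1 with hM
    have hNM : (2:ℤ)^(2*e₁+4) + 2 = 2 * M := by rw [hM]; ring
    have h1 : (2:ℤ)^(2*e₁+5) * (1 + 2^(4*k₁*e₁ + 8*k₁ + 4*e₁ + 7)) = 2^(2*e₁+5) * M^w := by
      calc (2:ℤ)^(2*e₁+5) * (1 + 2^(4*k₁*e₁ + 8*k₁ + 4*e₁ + 7))
          = ((2:ℤ)^(2*e₁+4) - 1) + ((2:ℤ)^(2*e₁+4))^(2*k₁+3) + ((2:ℤ)^(2*e₁+4) + 1) := by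
            rw [← pow_mul]; ring_nf
        _ = ((2:ℤ)^(2*e₁+4) + 2)^w := hZ2
        _ = 2^w * M^w := by rw [hNM, mul_pow]
        _ = 2^(2*e₁+5) * M^w := by rw [hw']
    have hmw : M^w = 1 + 2^(4*k₁*e₁ + 8*k₁ + 4*e₁ + 7) :=
      (mul_left_cancel₀ (pow_ne_zero _ two_ne_zero) h1).symm
    have hm2 : M^2 ≡ 1 [ZMOD ((2:ℤ)^(2*e₁+4))] := by
      refine Int.modEq_iff_dvd.mpr ⟨-(2^(2*e₁+2)) - 1, ?_⟩
      rw [hM]; ring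
    have hmw2 : M^w = (M^2)^(e₁+2) * M := by
      rw [hw', show 2*e₁+5 = 2*(e₁+2)+1 from by ring, pow_succ, pow_mul]
    have hcong : M^w ≡ M [ZMOD ((2:ℤ)^(2*e₁+4))] := by
      rw [hmw2]
      have h := (hm2.pow (e₁+2)).mul_right M
      simpa using h
    have hcong2 : M^w ≡ 1 [ZMOD ((2:ℤ)^(2*e₁+4))] := by
      refine Int.modEq_iff_dvd.mpr ?_
      rw [hmw, show (1:ℤ) - (1 + 2^(4*k₁*e₁ + 8*k₁ + 4*e₁ + 7)) = -(2^(4*k₁*e₁ + 8*k₁ + 4*e₁ + 7)) from by ring]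
      exact dvd_neg.mpr (pow_dvd_pow 2 (by omega))
    have hfinal := (hcong.symm.trans hcong2).dvd
    rw [show (1:ℤ) - M = -(2^(2*e₁+3)) from by rw [hM]; ring] at hfinal
    have hdvd2 : (2:ℤ)^(2*e₁+4) ∣ 2^(2*e₁+3) := (dvd_neg).mp hfinal
    have hle := Int.le_of_dvd (by positivity) hdvd2
    have hb : (2:ℤ)^(2*e₁+4) = 2*2^(2*e₁+3) := by ring
    have hbp : (0:ℤ) < 2^(2*e₁+3) := by positivity
    linarith

theorem w_lower_bound (e x y z w : ℕ) (he : 0 < e)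
    (hx : 0 < x) (hy : 0 < y) (hz : 0 < z) (hw : 0 < w)
    (heq : (4 ^ e - 1) ^ x + 4 ^ (e * y) + (4 ^ e + 1) ^ z = (4 ^ e + 2) ^ w)
    (hne1 : (e, x, y, z, w) ≠ (1, 3, 1, 1, 2))
    (hne2 : (e, x, y, z, w) ≠ (1, 3, 3, 3, 3)) :
    (w : ℝ) > (4 : ℝ) ^ e /
      (Real.log ((4 : ℝ) ^ e + 2) / Real.log ((4 : ℝ) ^ e - 1) +
       Real.log ((4 : ℝ) ^ e + 2) / Real.log ((4 : ℝ) ^ e + 1)) := by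
  have h4e1 : (1:ℕ) ≤ 4^e := Nat.one_le_pow _ _ (by norm_num)
  have h4ge : (4:ℕ) ≤ 4^e := by
    calc (4:ℕ) = 4^1 := (pow_one 4).symm
      _ ≤ 4^e := Nat.pow_le_pow_right (by norm_num) he
  -- basic term bounds
  have hax0 : 4^e - 1 ≤ (4^e-1)^x := Nat.le_self_pow hx.ne' _
  have hby0 : 4^e ≤ 4^(e*y) :=
    Nat.pow_le_pow_right (by norm_num) (Nat.le_mul_of_pos_right e hy)
  have hbz0 : 4^e + 1 ≤ (4^e+1)^z := Nat.le_self_pow hz.ne' _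
  -- w ≥ 2
  have hw2 : 2 ≤ w := by
    by_contra hcon
    have hw1 : w = 1 := by omega
    rw [hw1, pow_one] at heq
    omega
  -- integer version
  have hZ : ((4:ℤ)^e - 1)^x + (4:ℤ)^(e*y) + ((4:ℤ)^e + 1)^z = ((4:ℤ)^e + 2)^w := by
    have h := congrArg (Nat.cast : ℕ → ℤ) heq
    push_cast [Nat.cast_sub h4e1] at h
    exact h
  have h4geZ : (4:ℤ) ≤ (4:ℤ)^e := by exact_mod_cast h4ge
  obtain ⟨hxodd, hzodd, hyodd⟩ := parities he hx hy hz hw2 hZ h4geZ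
  -- strict nat inequalities
  have hp1 : 0 < 4^(e*y) := Nat.pow_pos (by norm_num)
  have hp2 : 0 < (4^e+1)^z := Nat.pow_pos (by omega)
  have hp3 : 0 < (4^e-1)^x := Nat.pow_pos (by omega)
  have haxlt : (4^e-1)^x < (4^e+2)^w := by omega
  have hbzlt : (4^e+1)^z < (4^e+2)^w := by omega
  -- real setup
  have h4r : (4:ℝ) ≤ (4:ℝ)^e := by
    have : ((4^e : ℕ) : ℝ) = (4:ℝ)^e := by push_cast; ring
    rw [← this]; exact_mod_cast h4ge
  have hLa : 0 < Real.log ((4:ℝ)^e - 1) := Real.log_pos (by linarith)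
  have hLb : 0 < Real.log ((4:ℝ)^e + 1) := Real.log_pos (by linarith)
  have hLc : 0 < Real.log ((4:ℝ)^e + 2) := Real.log_pos (by linarith)
  have hmu : 0 < Real.log ((4:ℝ)^e + 2) / Real.log ((4:ℝ)^e - 1)
      + Real.log ((4:ℝ)^e + 2) / Real.log ((4:ℝ)^e + 1) := by positivity
  rw [gt_iff_lt, div_lt_iff₀ hmu]
  -- case e = 1
  rcases eq_or_lt_of_le (show 1 ≤ e from he) with he1 | he2
  · have he1' : e = 1 := he1.symm
    subst he1'
    norm_num
    have l3 : 0 < Real.log 3 := Real.log_pos (by norm_num)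
    have l5 : 0 < Real.log 5 := Real.log_pos (by norm_num)
    have h35 : Real.log 3 < Real.log 5 := Real.log_lt_log (by norm_num) (by norm_num)
    have h56 : Real.log 5 < Real.log 6 := Real.log_lt_log (by norm_num) (by norm_num)
    have hsum : 2 < Real.log 6 / Real.log 3 + Real.log 6 / Real.log 5 := by
      rw [div_add_div _ _ (ne_of_gt l3) (ne_of_gt l5), lt_div_iff₀ (by positivity)]
      nlinarith
    have hw2r : (2:ℝ) ≤ (w:ℝ) := by exact_mod_cast hw2
    nlinarith
  · -- e ≥ 2
    obtain ⟨e₁, rfl⟩ : ∃ e₁, e = e₁ + 2 := ⟨e - 2, by omega⟩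
    have hZ2 : ((2:ℤ)^(2*e₁+4) - 1)^x + ((2:ℤ)^(2*e₁+4))^y + ((2:ℤ)^(2*e₁+4) + 1)^z
        = ((2:ℤ)^(2*e₁+4) + 2)^w := by
      have h4Z : ((4:ℤ))^(e₁+2) = 2^(2*e₁+4) := by
        rw [show (4:ℤ) = 2^2 by norm_num, ← pow_mul, show 2*(e₁+2) = 2*e₁+4 from by ring]
      rw [← h4Z, ← pow_mul]
      exact hZ
    -- main split
    rcases le_or_gt (4*(e₁+2)) w with hbig | hsmall
    · -- w ≥ 4e : x + z ≥ 4^e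
      have hZ2' : (((2:ℤ)^(2*(e₁+1)+2)) - 1)^x + ((2:ℤ)^(2*(e₁+1)+2))^y
          + (((2:ℤ)^(2*(e₁+1)+2)) + 1)^z = (((2:ℤ)^(2*(e₁+1)+2)) + 2)^w := by
        rw [show 2*(e₁+1)+2 = 2*e₁+4 from by ring]
        exact hZ2
      have hw4' : 4*(e₁+1) + 4 ≤ w := by omega
      have hxz : 2^(2*(e₁+1)+2) ≤ x + z :=
        xz_large hx hz hxodd hzodd hyodd hZ2' hw4' 
      have hxzN : 4^(e₁+2) ≤ x + z := by
        have h44 : (4:ℕ)^(e₁+2) = 2^(2*(e₁+1)+2) := by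
          rw [show (4:ℕ) = 2^2 by norm_num, ← pow_mul,
            show 2*(e₁+2) = 2*(e₁+1)+2 from by ring]
        omega
      -- real conclusion
      set e := e₁ + 2 with he_def
      have hb0 : (0:ℝ) < (4:ℝ)^e - 1 := by linarith
      have hltx : ((4:ℝ)^e - 1)^x < ((4:ℝ)^e + 2)^w := by
        have h := (Nat.cast_lt (α := ℝ)).mpr haxlt
        push_cast [Nat.cast_sub h4e1] at h
        exact h
      have hxr := Real.log_lt_log (pow_pos hb0 x) hltx
      rw [Real.log_pow, Real.log_pow] at hxr
      have hltz : ((4:ℝ)^e + 1)^z < ((4:ℝ)^e + 2)^w := by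
        have h := (Nat.cast_lt (α := ℝ)).mpr hbzlt
        push_cast at h
        exact h
      have hzr := Real.log_lt_log (pow_pos (by linarith : (0:ℝ) < (4:ℝ)^e + 1) z) hltz
      rw [Real.log_pow, Real.log_pow] at hzr
      have hxd : (x:ℝ) < (w:ℝ) * Real.log ((4:ℝ)^e + 2) / Real.log ((4:ℝ)^e - 1) :=
        (lt_div_iff₀ hLa).mpr hxr
      have hzd : (z:ℝ) < (w:ℝ) * Real.log ((4:ℝ)^e + 2) / Real.log ((4:ℝ)^e + 1) :=
        (lt_div_iff₀ hLb).mpr hzr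
      have hxzr : (4:ℝ)^e ≤ (x:ℝ) + z := by
        have h := (Nat.cast_le (α := ℝ)).mpr hxzN
        push_cast at h
        exact h
      have hexpand : (w:ℝ) * (Real.log ((4:ℝ)^e + 2) / Real.log ((4:ℝ)^e - 1)
          + Real.log ((4:ℝ)^e + 2) / Real.log ((4:ℝ)^e + 1))
          = (w:ℝ) * Real.log ((4:ℝ)^e + 2) / Real.log ((4:ℝ)^e - 1)
          + (w:ℝ) * Real.log ((4:ℝ)^e + 2) / Real.log ((4:ℝ)^e + 1) := by
        ring
      rw [hexpand]
      linarith
    · -- w small : contradiction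
      exact absurd (no_small hx hz hw hxodd hzodd hyodd heq hZ2 (by omega)) (fun h => h)
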